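/- For every μ ∈ ℝ and every x ≥ 0 the function (t,y) ↦ ρ_μ(t,x,y) is square integrable on (0,1] × ℝ_{≥0}, i.e. ∫_0^1 ∫_0^∞ ρ_μ(t,x,y)² dy dt < ∞. -/

import Mathlib

open MeasureTheory Real

/-- Complementary error function: `erfc x = (2/√π) ∫_x^∞ e^{-s²} ds`. -/
noncomputable def erfc (x : ℝ) : ℝ :=
  (2 / Real.sqrt π) * ∫ s in Set.Ioi x, Real.exp (-s ^ 2)

/-- Robin heat kernel `ρ_μ(t,x,y)`. -/
noncomputable def robinKernel (μ t x y : ℝ) : ℝ :=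
  (1 / Real.sqrt (2 * π * t)) *
      (Real.exp (-(y - x) ^ 2 / (2 * t)) + Real.exp (-(y + x) ^ 2 / (2 * t))) -
    μ * Real.exp (μ * (y + x) + μ ^ 2 * t / 2) *
      erfc ((y + x) / Real.sqrt (2 * t) + μ * Real.sqrt (t / 2))

open Set

lemma exp_sq_integrable : Integrable (fun s : ℝ => Real.exp (-s ^ 2)) := by
  have := integrable_exp_neg_mul_sq (one_pos (α := ℝ))
  simpa using this

lemma erfc_nonneg (z : ℝ) : 0 ≤ erfc z := by
  unfold erfc
  apply mul_nonneg (by positivity)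
  apply setIntegral_nonneg measurableSet_Ioi
  intro s _; positivity

lemma erfc_le_two (z : ℝ) : erfc z ≤ 2 := by
  unfold erfc
  have h1 : (∫ s in Set.Ioi z, Real.exp (-s ^ 2)) ≤ ∫ s : ℝ, Real.exp (-s ^ 2) :=
    setIntegral_le_integral exp_sq_integrable
      (Filter.Eventually.of_forall fun s => by positivity)
  have h2 : (∫ s : ℝ, Real.exp (-s ^ 2)) = Real.sqrt π := by
    simpa using integral_gaussian 1
  have hπ : 0 < Real.sqrt π := Real.sqrt_pos.2 pi_pos
  calc (2 / Real.sqrt π) * ∫ s in Set.Ioi z, Real.exp (-s ^ 2)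
      ≤ (2 / Real.sqrt π) * Real.sqrt π := by
        apply mul_le_mul_of_nonneg_left (h1.trans_eq h2) (by positivity)
    _ = 2 := by field_simp

lemma erfc_antitone : Antitone erfc := by
  intro a b hab
  unfold erfc
  apply mul_le_mul_of_nonneg_left _ (by positivity)
  apply setIntegral_mono_set exp_sq_integrable.integrableOn
    (Filter.Eventually.of_forall fun s => by positivity)
  exact Filter.Eventually.of_forall (Ioi_subset_Ioi hab)

lemma erfc_measurable : Measurable erfc := erfc_antitone.measurable

lemma erfc_le_exp {z : ℝ} (hz : 0 ≤ z) : erfc z ≤ 2 * Real.exp (-z ^ 2) := by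
  unfold erfc
  have hint : Integrable (fun s : ℝ => Real.exp (-z ^ 2) * Real.exp (-(s - z) ^ 2)) := by
    exact (exp_sq_integrable.comp_sub_right z).const_mul _
  have h1 : (∫ s in Set.Ioi z, Real.exp (-s ^ 2))
      ≤ ∫ s in Set.Ioi z, Real.exp (-z ^ 2) * Real.exp (-(s - z) ^ 2) := by
    apply setIntegral_mono_on exp_sq_integrable.integrableOn hint.integrableOn
      measurableSet_Ioi
    intro s hs
    rw [← Real.exp_add]
    apply Real.exp_le_exp.2
    nlinarith [le_of_lt (mem_Ioi.1 hs)]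
  have h2 : (∫ s in Set.Ioi z, Real.exp (-z ^ 2) * Real.exp (-(s - z) ^ 2))
      ≤ Real.exp (-z ^ 2) * Real.sqrt π := by
    have := setIntegral_le_integral (s := Set.Ioi z) hint
      (Filter.Eventually.of_forall fun s => by positivity)
    refine this.trans_eq ?_
    rw [integral_const_mul, integral_sub_right_eq_self (fun s : ℝ => Real.exp (-s ^ 2)) z]
    congr 1
    simpa using integral_gaussian 1
  have hπ : 0 < Real.sqrt π := Real.sqrt_pos.2 pi_pos
  calc (2 / Real.sqrt π) * ∫ s in Set.Ioi z, Real.exp (-s ^ 2)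
      ≤ (2 / Real.sqrt π) * (Real.exp (-z ^ 2) * Real.sqrt π) :=
        mul_le_mul_of_nonneg_left (h1.trans h2) (by positivity)
    _ = 2 * Real.exp (-z ^ 2) := by field_simp

lemma exponent_key (μ t x y : ℝ) (ht : 0 < t) :
    μ*(y+x) + μ^2*t/2 - ((y+x)/Real.sqrt (2*t) + μ*Real.sqrt (t/2))^2 = -(y+x)^2/(2*t) := by
  have hveq : Real.sqrt (t/2) = Real.sqrt (2*t)/2 := by
    have h1 : (Real.sqrt (2*t)/2)^2 = t/2 := by
      rw [div_pow, Real.sq_sqrt (by positivity)]; ring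
    rw [← Real.sqrt_sq (by positivity : (0:ℝ) ≤ Real.sqrt (2*t)/2), h1]
  rw [hveq]
  obtain ⟨u, hu', hu, hu0⟩ : ∃ u : ℝ, Real.sqrt (2*t) = u ∧ u^2 = 2*t ∧ 0 < u :=
    ⟨Real.sqrt (2*t), rfl, Real.sq_sqrt (by positivity), Real.sqrt_pos.2 (by positivity)⟩
  rw [hu']
  have ht2 : t = u^2/2 := by linarith
  rw [ht2]
  field_simp
  ring

/-- Pointwise bound of the erfc part of the kernel. -/
noncomputable def A3 (μ t x y : ℝ) : ℝ :=
  if μ < 0 then 2 * |μ| * Real.exp (μ^2/2) * Real.exp (μ*y)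
  else 2*μ*Real.exp (-(y+x)^2/(2*t))

lemma A3_nonneg (μ t x y : ℝ) : 0 ≤ A3 μ t x y := by
  unfold A3; split_ifs with h
  · positivity
  · push_neg at h; positivity

lemma abs_term_le (μ t x y : ℝ) (ht : 0 < t) (ht1 : t ≤ 1) (hx : 0 ≤ x) (hy : 0 ≤ y) :
    |μ * Real.exp (μ*(y+x) + μ^2*t/2) *
      erfc ((y+x)/Real.sqrt (2*t) + μ*Real.sqrt (t/2))| ≤ A3 μ t x y := by
  set z := (y+x)/Real.sqrt (2*t) + μ*Real.sqrt (t/2) with hz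
  have hE : (0:ℝ) < Real.exp (μ*(y+x) + μ^2*t/2) := Real.exp_pos _
  rw [abs_mul, abs_mul, abs_of_pos hE, abs_of_nonneg (erfc_nonneg z)]
  unfold A3
  split_ifs with hμ
  · have h1 : erfc z ≤ 2 := erfc_le_two z
    have h2 : Real.exp (μ*(y+x) + μ^2*t/2) ≤ Real.exp (μ^2/2) * Real.exp (μ*y) := by
      rw [← Real.exp_add]
      apply Real.exp_le_exp.2
      nlinarith [mul_nonpos_of_nonpos_of_nonneg hμ.le hx, sq_nonneg μ]
    calc |μ| * Real.exp (μ*(y+x) + μ^2*t/2) * erfc z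
        ≤ |μ| * (Real.exp (μ^2/2) * Real.exp (μ*y)) * 2 := by
          apply mul_le_mul (mul_le_mul_of_nonneg_left h2 (abs_nonneg μ)) h1
            (erfc_nonneg z) (by positivity)
      _ = 2 * |μ| * Real.exp (μ^2/2) * Real.exp (μ*y) := by ring
  · push_neg at hμ
    have hz0 : 0 ≤ z := by
      apply add_nonneg (by positivity)
      exact mul_nonneg hμ (Real.sqrt_nonneg _)
    have h1 : erfc z ≤ 2 * Real.exp (-z^2) := erfc_le_exp hz0
    have habs : |μ| = μ := abs_of_nonneg hμ
    calc |μ| * Real.exp (μ*(y+x) + μ^2*t/2) * erfc z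
        ≤ |μ| * Real.exp (μ*(y+x) + μ^2*t/2) * (2 * Real.exp (-z^2)) := by
          apply mul_le_mul_of_nonneg_left h1 (by positivity)
      _ = 2*μ*(Real.exp (μ*(y+x) + μ^2*t/2) * Real.exp (-z^2)) := by rw [habs]; ring
      _ = 2*μ*Real.exp (-(y+x)^2/(2*t)) := by
          rw [← Real.exp_add, ← exponent_key μ t x y ht, hz]; ring_nf

lemma abs_robin_le (μ t x y : ℝ) (ht : 0 < t) (ht1 : t ≤ 1) (hx : 0 ≤ x) (hy : 0 ≤ y) :
    |robinKernel μ t x y| ≤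
      (1/Real.sqrt (2*π*t)) * Real.exp (-(y-x)^2/(2*t))
      + (1/Real.sqrt (2*π*t)) * Real.exp (-(y+x)^2/(2*t)) + A3 μ t x y := by
  unfold robinKernel
  refine (abs_sub _ _).trans ?_
  gcongr
  · rw [abs_of_nonneg (by positivity)]
    apply le_of_eq; ring
  · exact abs_term_le μ t x y ht ht1 hx hy

/-- square of `A3`, written with doubled exponents. -/
noncomputable def A3sq (μ t x y : ℝ) : ℝ :=
  if μ < 0 then 4*μ^2*Real.exp (μ^2) * Real.exp (2*μ*y)
  else 4*μ^2*Real.exp (-(y+x)^2/t)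

lemma A3_sq_eq (μ t x y : ℝ) (ht : 0 < t) : (A3 μ t x y)^2 = A3sq μ t x y := by
  unfold A3 A3sq
  split_ifs with h
  · have e1 : Real.exp (μ^2/2)^2 = Real.exp (μ^2) := by rw [sq, ← Real.exp_add]; ring_nf
    have e2 : Real.exp (μ*y)^2 = Real.exp (2*μ*y) := by rw [sq, ← Real.exp_add]; ring_nf
    rw [mul_pow, mul_pow, mul_pow, sq_abs, e1, e2]; ring
  · have e3 : Real.exp (-(y+x)^2/(2*t))^2 = Real.exp (-(y+x)^2/t) := by
      rw [sq, ← Real.exp_add]; congr 1; field_simp; ring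
    rw [mul_pow, mul_pow, e3]; ring

/-- The dominating function. -/
noncomputable def gdom (μ t x y : ℝ) : ℝ :=
  3 * ((1/(2*π*t)) * Real.exp (-(y-x)^2/t) + (1/(2*π*t)) * Real.exp (-(y+x)^2/t)
    + A3sq μ t x y)

lemma sq_robin_le (μ t x y : ℝ) (ht : 0 < t) (ht1 : t ≤ 1) (hx : 0 ≤ x) (hy : 0 ≤ y) :
    (robinKernel μ t x y)^2 ≤ gdom μ t x y := by
  have h := abs_robin_le μ t x y ht ht1 hx hy
  set a := (1/Real.sqrt (2*π*t)) * Real.exp (-(y-x)^2/(2*t)) with ha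
  set b := (1/Real.sqrt (2*π*t)) * Real.exp (-(y+x)^2/(2*t)) with hb
  set c := A3 μ t x y with hc
  have ha0 : 0 ≤ a := by positivity
  have hb0 : 0 ≤ b := by positivity
  have hc0 : 0 ≤ c := A3_nonneg μ t x y
  have h1 : (robinKernel μ t x y)^2 ≤ (a + b + c)^2 := by
    rw [← sq_abs]
    exact pow_le_pow_left₀ (abs_nonneg _) h 2
  have h2 : (a + b + c)^2 ≤ 3*(a^2 + b^2 + c^2) := by
    nlinarith [sq_nonneg (a-b), sq_nonneg (a-c), sq_nonneg (b-c)]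
  refine (h1.trans h2).trans (le_of_eq ?_)
  unfold gdom
  have hsq : ∀ u : ℝ, ((1/Real.sqrt (2*π*t)) * Real.exp (-u/(2*t)))^2
      = (1/(2*π*t)) * Real.exp (-u/t) := by
    intro u
    rw [mul_pow, div_pow, one_pow, Real.sq_sqrt (by positivity), sq, ← Real.exp_add]
    congr 2
    field_simp
    ring
  rw [ha, hb, hc, hsq ((y-x)^2), hsq ((y+x)^2), A3_sq_eq μ t x y ht]

lemma integrable_gauss_shift (b c : ℝ) (hb : 0 < b) :
    Integrable (fun y : ℝ => Real.exp (-(y - c)^2/b)) := by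
  have h := (integrable_exp_neg_mul_sq (show (0:ℝ) < 1/b by positivity)).comp_sub_right c
  have heq : (fun y : ℝ => Real.exp (-(y - c)^2/b))
      = fun y : ℝ => Real.exp (-(1/b) * (y - c)^2) := by
    funext y; congr 1; field_simp
  rw [heq]; exact h

lemma integrable_gauss_shift' (b c : ℝ) (hb : 0 < b) :
    Integrable (fun y : ℝ => Real.exp (-(y + c)^2/b)) := by
  have h := integrable_gauss_shift b (-c) hb
  have heq : (fun y : ℝ => Real.exp (-(y + c)^2/b))
      = fun y : ℝ => Real.exp (-(y - -c)^2/b) := by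
    funext y; ring_nf
  rw [heq]; exact h

lemma integral_gauss_shift_le (b c : ℝ) (hb : 0 < b) (S : Set ℝ) :
    ∫ y in S, Real.exp (-(y - c)^2/b) ≤ Real.sqrt (π*b) := by
  have h1 := setIntegral_le_integral (s := S) (integrable_gauss_shift b c hb)
    (Filter.Eventually.of_forall fun y => by positivity)
  refine h1.trans ?_
  have heq : (fun y : ℝ => Real.exp (-(y - c)^2/b))
      = fun y : ℝ => Real.exp (-(1/b) * (y - c)^2) := by
    funext y; congr 1; field_simp
  rw [heq, integral_sub_right_eq_self (fun y : ℝ => Real.exp (-(1/b) * y^2)) c,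
    integral_gaussian]
  apply le_of_eq
  congr 1
  field_simp

lemma integral_gauss_shift'_le (b c : ℝ) (hb : 0 < b) (S : Set ℝ) :
    ∫ y in S, Real.exp (-(y + c)^2/b) ≤ Real.sqrt (π*b) := by
  have heq : (fun y : ℝ => Real.exp (-(y + c)^2/b))
      = fun y : ℝ => Real.exp (-(y - -c)^2/b) := by
    funext y; ring_nf
  rw [heq]
  exact integral_gauss_shift_le b (-c) hb S

lemma exp_mul_integrableOn (μ : ℝ) (hμ : μ < 0) :
    IntegrableOn (fun y : ℝ => Real.exp (2*μ*y)) (Ici (0:ℝ)) := by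
  have h := exp_neg_integrableOn_Ioi 0 (show (0:ℝ) < -(2*μ) by linarith)
  rw [integrableOn_Ici_iff_integrableOn_Ioi]
  have heq : (fun y : ℝ => Real.exp (2*μ*y)) = fun y : ℝ => Real.exp (-(-(2*μ)) * y) := by
    funext y; ring_nf
  rw [heq]; exact h

lemma gdom_integrableOn (μ x : ℝ) {t : ℝ} (ht : 0 < t) :
    IntegrableOn (fun y => gdom μ t x y) (Ici (0:ℝ)) := by
  unfold gdom
  apply Integrable.const_mul
  apply Integrable.add
  apply Integrable.add
  · exact ((integrable_gauss_shift t x ht).const_mul _).integrableOn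
  · exact ((integrable_gauss_shift' t x ht).const_mul _).integrableOn
  · unfold A3sq
    rcases lt_or_ge μ 0 with h|h
    · simp only [if_pos h]
      exact (exp_mul_integrableOn μ h).const_mul _
    · simp only [if_neg (not_lt.2 h)]
      exact ((integrable_gauss_shift' t x ht).const_mul _).integrableOn

lemma robin_sq_meas (μ x : ℝ) :
    Measurable (fun p : ℝ × ℝ => (robinKernel μ p.1 x p.2)^2) := by
  unfold robinKernel
  apply Measurable.pow_const
  apply Measurable.sub
  · apply Measurable.mul
    · exact (measurable_const.div
        (Real.continuous_sqrt.measurable.comp (measurable_fst.const_mul _)))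
    · apply Measurable.add <;>
      · apply Real.measurable_exp.comp
        apply Measurable.div
        · measurability
        · exact measurable_fst.const_mul _
  · apply Measurable.mul
    · apply Measurable.mul measurable_const
      apply Real.measurable_exp.comp
      measurability
    · apply erfc_measurable.comp
      apply Measurable.add
      · exact (measurable_snd.add_const _).div
          (Real.continuous_sqrt.measurable.comp (measurable_fst.const_mul _))
      · exact (Real.continuous_sqrt.measurable.comp (measurable_fst.div_const _)).const_mul _

lemma slice_integrable (μ x : ℝ) (hx : 0 ≤ x) {t : ℝ} (ht : t ∈ Ioc (0:ℝ) 1) :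
    IntegrableOn (fun y => (robinKernel μ t x y)^2) (Ici (0:ℝ)) := by
  apply Integrable.mono' (gdom_integrableOn μ x ht.1)
  · exact ((robin_sq_meas μ x).comp measurable_prodMk_left).aestronglyMeasurable
  · filter_upwards [ae_restrict_mem measurableSet_Ici] with y hy
    rw [Real.norm_eq_abs, abs_of_nonneg (sq_nonneg _)]
    exact sq_robin_le μ t x y ht.1 ht.2 hx hy

/-- constant bounding the `y`-integral of `A3sq`. -/
noncomputable def Kc (μ : ℝ) : ℝ :=
  if μ < 0 then 4*μ^2*Real.exp (μ^2) * ∫ y in Ici (0:ℝ), Real.exp (2*μ*y)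
  else 4*μ^2*Real.sqrt π

lemma A3sq_setIntegral_le (μ x : ℝ) (hx : 0 ≤ x) {t : ℝ} (ht : 0 < t) (ht1 : t ≤ 1) :
    ∫ y in Ici (0:ℝ), A3sq μ t x y ≤ Kc μ := by
  unfold A3sq Kc
  rcases lt_or_ge μ 0 with h|h
  · simp only [if_pos h]
    rw [integral_const_mul]
  · simp only [if_neg (not_lt.2 h)]
    rw [integral_const_mul]
    apply mul_le_mul_of_nonneg_left _ (by positivity)
    refine (integral_gauss_shift'_le t x ht (Ici 0)).trans ?_
    apply Real.sqrt_le_sqrt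
    nlinarith [pi_pos]

/-- dominating function for the `t`-integral. -/
noncomputable def Hf (μ : ℝ) : ℝ → ℝ := fun t => 3*(Real.sqrt (π*t)/(π*t) + Kc μ)

lemma norm_slice_integral_le (μ x : ℝ) (hx : 0 ≤ x) {t : ℝ} (ht : t ∈ Ioc (0:ℝ) 1) :
    ∫ y in Ici (0:ℝ), ‖(robinKernel μ t x y)^2‖ ≤ Hf μ t := by
  have heq : (fun y => ‖(robinKernel μ t x y)^2‖) = fun y => (robinKernel μ t x y)^2 := by
    funext y; exact Real.norm_of_nonneg (sq_nonneg _)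
  rw [heq]
  have h1 : ∫ y in Ici (0:ℝ), (robinKernel μ t x y)^2 ≤ ∫ y in Ici (0:ℝ), gdom μ t x y :=
    setIntegral_mono_on (slice_integrable μ x hx ht) (gdom_integrableOn μ x ht.1)
      measurableSet_Ici (fun y hy => sq_robin_le μ t x y ht.1 ht.2 hx hy)
  refine h1.trans ?_
  have hI1 : IntegrableOn (fun y => (1/(2*π*t)) * Real.exp (-(y-x)^2/t)) (Ici (0:ℝ)) :=
    ((integrable_gauss_shift t x ht.1).const_mul _).integrableOn
  have hI2 : IntegrableOn (fun y => (1/(2*π*t)) * Real.exp (-(y+x)^2/t)) (Ici (0:ℝ)) :=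
    ((integrable_gauss_shift' t x ht.1).const_mul _).integrableOn
  have hI3 : IntegrableOn (fun y => A3sq μ t x y) (Ici (0:ℝ)) := by
    unfold A3sq
    rcases lt_or_ge μ 0 with h|h
    · simp only [if_pos h]
      exact (exp_mul_integrableOn μ h).const_mul _
    · simp only [if_neg (not_lt.2 h)]
      exact ((integrable_gauss_shift' t x ht.1).const_mul _).integrableOn
  unfold gdom Hf
  have hI12 : IntegrableOn (fun y => (1/(2*π*t)) * Real.exp (-(y-x)^2/t)
      + (1/(2*π*t)) * Real.exp (-(y+x)^2/t)) (Ici (0:ℝ)) := hI1.add hI2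
  rw [integral_const_mul]
  simp only [integral_add hI12 hI3, integral_add hI1 hI2, integral_const_mul]
  have e2 : Real.sqrt (π*t)/(π*t) + Kc μ
      = (1/(2*π*t)) * Real.sqrt (π*t) + (1/(2*π*t)) * Real.sqrt (π*t) + Kc μ := by
    field_simp [pi_ne_zero, ht.1.ne']
    ring
  rw [e2]
  have hc : (0:ℝ) ≤ 1/(2*π*t) :=
    (one_div_pos.2 (mul_pos (mul_pos two_pos pi_pos) ht.1)).le
  apply mul_le_mul_of_nonneg_left _ (by norm_num : (0:ℝ) ≤ 3)
  refine add_le_add (add_le_add ?_ ?_) ?_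
  · exact mul_le_mul_of_nonneg_left (integral_gauss_shift_le t x ht.1 (Ici 0)) hc
  · exact mul_le_mul_of_nonneg_left (integral_gauss_shift'_le t x ht.1 (Ici 0)) hc
  · exact A3sq_setIntegral_le μ x hx ht.1 ht.2

lemma Hf_integrableOn (μ : ℝ) : IntegrableOn (Hf μ) (Ioc (0:ℝ) 1) := by
  unfold Hf
  apply Integrable.const_mul
  apply Integrable.add _ (integrableOn_const measure_Ioc_lt_top.ne)
  have hr : IntegrableOn (fun t : ℝ => (1/Real.sqrt π) * t ^ (-(1/2) : ℝ)) (Ioc (0:ℝ) 1) := by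
    apply Integrable.const_mul
    have h := intervalIntegral.intervalIntegrable_rpow'
      (show (-1:ℝ) < -(1/2) by norm_num) (a := (0:ℝ)) (b := 1)
    rwa [intervalIntegrable_iff, uIoc_of_le zero_le_one] at h
  apply hr.congr_fun _ measurableSet_Ioc
  intro t htm
  have ht : 0 < t := htm.1
  have hst : (0:ℝ) < Real.sqrt t := Real.sqrt_pos.2 ht
  have hsπ : (0:ℝ) < Real.sqrt π := Real.sqrt_pos.2 pi_pos
  show (1/Real.sqrt π) * t ^ (-(1/2):ℝ) = Real.sqrt (π*t)/(π*t)
  rw [Real.rpow_neg ht.le, ← Real.sqrt_eq_rpow, Real.sqrt_mul pi_pos.le]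
  rw [show π * t = (Real.sqrt π * Real.sqrt π) * (Real.sqrt t * Real.sqrt t) by
    rw [Real.mul_self_sqrt pi_pos.le, Real.mul_self_sqrt ht.le]]
  field_simp

/-- For every `μ ∈ ℝ` and every `x ≥ 0`, the function `(t,y) ↦ ρ_μ(t,x,y)` is square
integrable on `(0,1] × ℝ_{≥0}`, i.e. `(t,y) ↦ ρ_μ(t,x,y)²` is integrable there. -/
theorem robinKernel_sq_integrable (μ x : ℝ) (hx : 0 ≤ x) :
    IntegrableOn (fun p : ℝ × ℝ => (robinKernel μ p.1 x p.2) ^ 2)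
      (Set.Ioc (0 : ℝ) 1 ×ˢ Set.Ici (0 : ℝ)) (volume : Measure (ℝ × ℝ)) := by
  have hmeas := robin_sq_meas μ x
  rw [IntegrableOn, Measure.volume_eq_prod, ← Measure.prod_restrict]
  rw [integrable_prod_iff hmeas.aestronglyMeasurable]
  constructor
  · filter_upwards [ae_restrict_mem measurableSet_Ioc] with t ht
    exact slice_integrable μ x hx ht
  · apply Integrable.mono' (Hf_integrableOn μ)
    · exact (hmeas.norm.aestronglyMeasurable).integral_prod_right'
    · filter_upwards [ae_restrict_mem measurableSet_Ioc] with t ht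
      rw [Real.norm_of_nonneg (integral_nonneg fun y => norm_nonneg _)]
      exact norm_slice_integral_le μ x hx ht
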